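/- For ρ ∈ [0,1) and μ ∈ [−π, π), the function f(θ) = (1/2π)·((1−ρ²)/(1+ρ²))·((1−ρ²)/(1+ρ²−2ρcos(θ−μ)))² integrates to 1 over [−π, π). -/

import Mathlib

set_option maxHeartbeats 1000000

open Real intervalIntegral

private lemma ewc_arctan_term (ρ s c : ℝ) (hsc : s ^ 2 = 1 - c ^ 2)
    (hd2 : (0:ℝ) < 1 - ρ * c) (hd : (0:ℝ) < 1 + ρ ^ 2 - 2 * ρ * c) :
    1 / (1 + (ρ * s / (1 - ρ * c)) ^ 2) *
      ((ρ * c * (1 - ρ * c) - ρ * s * (ρ * s)) / (1 - ρ * c) ^ 2)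
      = (ρ * c - ρ ^ 2) / (1 + ρ ^ 2 - 2 * ρ * c) := by
  have h1 : 1 + (ρ * s / (1 - ρ * c)) ^ 2 = (1 + ρ ^ 2 - 2 * ρ * c) / (1 - ρ * c) ^ 2 := by
    field_simp
    linear_combination ρ ^ 2 * hsc
  have h2 : ρ * c * (1 - ρ * c) - ρ * s * (ρ * s)
      = (1 - ρ * c) ^ 2 / (1 - ρ * c) ^ 2 * (ρ * c - ρ ^ 2) := by
    rw [div_self (by positivity)]
    linear_combination -ρ ^ 2 * hsc
  rw [h1, h2, div_self (by positivity : ((1:ℝ) - ρ * c) ^ 2 ≠ 0), one_mul]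
  rw [div_div_eq_mul_div, one_mul, div_mul_div_comm]
  rw [div_eq_div_iff (by positivity) (ne_of_gt hd)]
  ring

private lemma ewc_deriv_eq (ρ s c : ℝ) (hsc : s ^ 2 = 1 - c ^ 2) (hρ2 : (0:ℝ) < 1 - ρ ^ 2)
    (hd : (0:ℝ) < 1 + ρ ^ 2 - 2 * ρ * c) :
    (1 / (2 * Real.pi)) * ((1 - ρ ^ 2) / (1 + ρ ^ 2)) *
        ((1 - ρ ^ 2) / (1 + ρ ^ 2 - 2 * ρ * c)) ^ 2
      = (1 / (2 * Real.pi)) * ((1 - ρ ^ 2) / (1 + ρ ^ 2)) * (1 - ρ ^ 2) ^ 2 *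
          ( (1 + ρ ^ 2) / (1 - ρ ^ 2) ^ 3 *
              (1 + 2 * ((ρ * c - ρ ^ 2) / (1 + ρ ^ 2 - 2 * ρ * c)))
            + (2 * ρ) / (1 - ρ ^ 2) ^ 2 *
              ((c * (1 + ρ ^ 2 - 2 * ρ * c) - s * (2 * ρ * s)) / (1 + ρ ^ 2 - 2 * ρ * c) ^ 2) ) := by
  have hπ : (2 * Real.pi) ≠ 0 := by positivity
  have hρp : (0:ℝ) < 1 + ρ ^ 2 := by positivity
  rw [show c * (1 + ρ ^ 2 - 2 * ρ * c) - s * (2 * ρ * s)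
      = c * (1 + ρ ^ 2 - 2 * ρ * c) - 2 * ρ * (1 - c ^ 2) from by linear_combination -2 * ρ * hsc]
  field_simp
  ring

/-- The key integral with `μ = 0`. -/
private lemma ewc_key (ρ : ℝ) (h0 : 0 ≤ ρ) (h1 : ρ < 1) :
    ∫ θ in (-Real.pi)..Real.pi,
      (1 / (2 * Real.pi)) * ((1 - ρ ^ 2) / (1 + ρ ^ 2)) *
        ((1 - ρ ^ 2) / (1 + ρ ^ 2 - 2 * ρ * Real.cos θ)) ^ 2 = 1 := by
  have hρ2 : (0:ℝ) < 1 - ρ ^ 2 := by nlinarith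
  have hρp : (0:ℝ) < 1 + ρ ^ 2 := by positivity
  have hdpos : ∀ x : ℝ, (0:ℝ) < 1 + ρ ^ 2 - 2 * ρ * Real.cos x := by
    intro x
    nlinarith [Real.neg_one_le_cos x, Real.cos_le_one x]
  have hd2pos : ∀ x : ℝ, (0:ℝ) < 1 - ρ * Real.cos x := by
    intro x
    nlinarith [Real.neg_one_le_cos x, Real.cos_le_one x]
  set F : ℝ → ℝ := fun θ =>
    (1 / (2 * Real.pi)) * ((1 - ρ ^ 2) / (1 + ρ ^ 2)) * (1 - ρ ^ 2) ^ 2 *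
      ( (1 + ρ ^ 2) / (1 - ρ ^ 2) ^ 3 *
          (θ + 2 * Real.arctan (ρ * Real.sin θ / (1 - ρ * Real.cos θ)))
        + (2 * ρ) / (1 - ρ ^ 2) ^ 2 * (Real.sin θ / (1 + ρ ^ 2 - 2 * ρ * Real.cos θ)) )
    with hF
  have hderiv : ∀ x ∈ Set.uIcc (-Real.pi) Real.pi,
      HasDerivAt F ((1 / (2 * Real.pi)) * ((1 - ρ ^ 2) / (1 + ρ ^ 2)) *
        ((1 - ρ ^ 2) / (1 + ρ ^ 2 - 2 * ρ * Real.cos x)) ^ 2) x := by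
    intro x _
    have hd2 := hd2pos x
    have hd := hdpos x
    have hsc : Real.sin x ^ 2 = 1 - Real.cos x ^ 2 := by
      have := Real.sin_sq_add_cos_sq x; linarith
    have hu : HasDerivAt (fun θ => ρ * Real.sin θ / (1 - ρ * Real.cos θ))
        ((ρ * Real.cos x * (1 - ρ * Real.cos x) - ρ * Real.sin x * (ρ * Real.sin x)) /
          (1 - ρ * Real.cos x) ^ 2) x :=
      (((Real.hasDerivAt_sin x).const_mul ρ).div
        (((Real.hasDerivAt_cos x).const_mul ρ).const_sub 1) (ne_of_gt hd2)).congr_deriv (by ring)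
    have ha : HasDerivAt (fun θ => Real.arctan (ρ * Real.sin θ / (1 - ρ * Real.cos θ)))
        (1 / (1 + (ρ * Real.sin x / (1 - ρ * Real.cos x)) ^ 2) *
          ((ρ * Real.cos x * (1 - ρ * Real.cos x) - ρ * Real.sin x * (ρ * Real.sin x)) /
            (1 - ρ * Real.cos x) ^ 2)) x := by
      have := (Real.hasDerivAt_arctan (ρ * Real.sin x / (1 - ρ * Real.cos x))).comp x hu
      simpa [div_eq_mul_inv, mul_comm, Function.comp_def] using this
    have hs : HasDerivAt (fun θ => Real.sin θ / (1 + ρ ^ 2 - 2 * ρ * Real.cos θ))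
        ((Real.cos x * (1 + ρ ^ 2 - 2 * ρ * Real.cos x) -
            Real.sin x * (2 * ρ * Real.sin x)) / (1 + ρ ^ 2 - 2 * ρ * Real.cos x) ^ 2) x :=
      ((Real.hasDerivAt_sin x).div
        (((Real.hasDerivAt_cos x).const_mul (2*ρ)).const_sub (1 + ρ ^ 2))
        (ne_of_gt hd)).congr_deriv (by ring)
    have hmain : HasDerivAt F
        ((1 / (2 * Real.pi)) * ((1 - ρ ^ 2) / (1 + ρ ^ 2)) * (1 - ρ ^ 2) ^ 2 *
          ( (1 + ρ ^ 2) / (1 - ρ ^ 2) ^ 3 *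
              (1 + 2 * (1 / (1 + (ρ * Real.sin x / (1 - ρ * Real.cos x)) ^ 2) *
                ((ρ * Real.cos x * (1 - ρ * Real.cos x) - ρ * Real.sin x * (ρ * Real.sin x)) /
                  (1 - ρ * Real.cos x) ^ 2)))
            + (2 * ρ) / (1 - ρ ^ 2) ^ 2 *
              ((Real.cos x * (1 + ρ ^ 2 - 2 * ρ * Real.cos x) -
                Real.sin x * (2 * ρ * Real.sin x)) /
                  (1 + ρ ^ 2 - 2 * ρ * Real.cos x) ^ 2) )) x :=
      ((((hasDerivAt_id x).add (ha.const_mul 2)).const_mul _).add (hs.const_mul _)).const_mul _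
    convert hmain using 1
    rw [ewc_arctan_term ρ _ _ hsc hd2 hd]
    exact ewc_deriv_eq ρ _ _ hsc hρ2 hd
  have hcont : Continuous (fun θ => (1 / (2 * Real.pi)) * ((1 - ρ ^ 2) / (1 + ρ ^ 2)) *
      ((1 - ρ ^ 2) / (1 + ρ ^ 2 - 2 * ρ * Real.cos θ)) ^ 2) := by
    apply Continuous.mul continuous_const
    apply Continuous.pow
    exact Continuous.div continuous_const (by continuity) (fun x => ne_of_gt (hdpos x))
  rw [intervalIntegral.integral_eq_sub_of_hasDerivAt hderiv (hcont.intervalIntegrable _ _)]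
  have hv1 : ρ * Real.sin Real.pi / (1 - ρ * Real.cos Real.pi) = 0 := by simp
  have hv2 : ρ * Real.sin (-Real.pi) / (1 - ρ * Real.cos (-Real.pi)) = 0 := by simp
  simp only [hF, hv1, hv2, Real.arctan_zero, Real.sin_pi, Real.sin_neg, neg_zero, mul_zero,
    zero_div, zero_mul, add_zero, zero_add]
  have hπ : (0:ℝ) < Real.pi := Real.pi_pos
  field_simp
  ring

/-- The EWC density in the special case `ρ₁ = ρ₂ = ρ`, `μ₁ = μ₂ = μ` (a submodel of the
Jones–Pewsey family) integrates to 1 over `[-π, π)`. -/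
theorem ewc_equal_params_integral_eq_one (ρ μ : ℝ)
    (hρ : ρ ∈ Set.Ico (0 : ℝ) 1) (hμ : μ ∈ Set.Ico (-Real.pi) Real.pi) :
    ∫ θ in (-Real.pi)..Real.pi,
      (1 / (2 * Real.pi)) * ((1 - ρ ^ 2) / (1 + ρ ^ 2)) *
        ((1 - ρ ^ 2) / (1 + ρ ^ 2 - 2 * ρ * Real.cos (θ - μ))) ^ 2 = 1 := by
  obtain ⟨h0, h1⟩ := hρ
  set g : ℝ → ℝ := fun θ => (1 / (2 * Real.pi)) * ((1 - ρ ^ 2) / (1 + ρ ^ 2)) *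
      ((1 - ρ ^ 2) / (1 + ρ ^ 2 - 2 * ρ * Real.cos θ)) ^ 2 with hg
  have hshift : (∫ θ in (-Real.pi)..Real.pi,
      (1 / (2 * Real.pi)) * ((1 - ρ ^ 2) / (1 + ρ ^ 2)) *
        ((1 - ρ ^ 2) / (1 + ρ ^ 2 - 2 * ρ * Real.cos (θ - μ))) ^ 2)
      = ∫ x in (-Real.pi - μ)..(Real.pi - μ), g x :=
    intervalIntegral.integral_comp_sub_right g μ
  have hper : Function.Periodic g (2 * Real.pi) := by
    intro x
    simp [hg, Real.cos_add_two_pi]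
  have hT : (-Real.pi - μ) + 2 * Real.pi = Real.pi - μ := by ring
  have hT' : (-Real.pi) + 2 * Real.pi = Real.pi := by ring
  have hper2 := hper.intervalIntegral_add_eq (-Real.pi - μ) (-Real.pi)
  rw [hT, hT'] at hper2
  rw [hshift, hper2]
  exact ewc_key ρ h0 h1
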